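/- The staircase GQ-polynomial factors: GQ_{δ_r}(x_1,…,x_r|b) = ∏_{1≤i≤j≤r} (x_i ⊕ x_j), independent of b. -/

import Mathlib

open Finset

section GQAux
variable {K : Type*} [Field K] {r : ℕ}

lemma prod_pairs_rev (g : Fin r → Fin r → K) :
    (∏ i : Fin r, ∏ j ∈ Finset.Ioi i, g (Fin.rev j) (Fin.rev i)) =
    ∏ i : Fin r, ∏ j ∈ Finset.Ioi i, g i j := by
  rw [Finset.prod_sigma', Finset.prod_sigma']
  refine Finset.prod_nbij' (fun p => ⟨Fin.rev p.2, Fin.rev p.1⟩)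
    (fun p => ⟨Fin.rev p.2, Fin.rev p.1⟩) ?_ ?_ ?_ ?_ ?_ <;>
    simp [Finset.mem_sigma, Finset.mem_Ioi, Fin.rev_lt_rev]

lemma prod_pairs_symm (w : Equiv.Perm (Fin r)) (g : Fin r → Fin r → K)
    (hg : ∀ i j, g i j = g j i) :
    (∏ i : Fin r, ∏ j ∈ Finset.Ioi i, g (w i) (w j)) =
    ∏ i : Fin r, ∏ j ∈ Finset.Ioi i, g i j := by
  rw [Finset.prod_sigma', Finset.prod_sigma']
  refine Finset.prod_nbij'
    (fun p => if w p.1 < w p.2 then ⟨w p.1, w p.2⟩ else ⟨w p.2, w p.1⟩)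
    (fun p => if w⁻¹ p.1 < w⁻¹ p.2 then ⟨w⁻¹ p.1, w⁻¹ p.2⟩ else ⟨w⁻¹ p.2, w⁻¹ p.1⟩)
    ?_ ?_ ?_ ?_ ?_
  · rintro ⟨i, j⟩ hij
    simp only [Finset.mem_sigma, Finset.mem_Ioi] at hij ⊢
    split_ifs with h
    · exact ⟨Finset.mem_univ _, h⟩
    · refine ⟨Finset.mem_univ _, lt_of_le_of_ne (not_lt.mp h) ?_⟩
      exact fun he => (ne_of_lt hij.2) (w.injective he).symm
  · rintro ⟨i, j⟩ hij
    simp only [Finset.mem_sigma, Finset.mem_Ioi] at hij ⊢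
    split_ifs with h
    · exact ⟨Finset.mem_univ _, h⟩
    · refine ⟨Finset.mem_univ _, lt_of_le_of_ne (not_lt.mp h) ?_⟩
      exact fun he => (ne_of_lt hij.2) (w⁻¹.injective he).symm
  · rintro ⟨i, j⟩ hij
    simp only [Finset.mem_sigma, Finset.mem_Ioi] at hij
    by_cases h : w i < w j
    · simp [h, hij.2]
    · simp [h, lt_asymm hij.2]
  · rintro ⟨i, j⟩ hij
    simp only [Finset.mem_sigma, Finset.mem_Ioi] at hij
    by_cases h : w⁻¹ i < w⁻¹ j
    · rw [Equiv.Perm.inv_def] at h; simp [h, hij.2]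
    · rw [Equiv.Perm.inv_def] at h; simp [h, lt_asymm hij.2]
  · rintro ⟨i, j⟩ hij
    by_cases h : w i < w j
    · simp [h]
    · simp [h, hg (w j) (w i)]


lemma prod_pairs_sub_perm (w : Equiv.Perm (Fin r)) (z : Fin r → K) :
    (∏ i : Fin r, ∏ j ∈ Finset.Ioi i, (z (w i) - z (w j))) =
    ((Equiv.Perm.sign w : ℤ) : K) * ∏ i : Fin r, ∏ j ∈ Finset.Ioi i, (z i - z j) := by
  have key : ∀ v : Fin r → K, (∏ i : Fin r, ∏ j ∈ Finset.Ioi i, (v i - v j)) =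
      (∏ i : Fin r, ∏ j ∈ Finset.Ioi i, (-1 : K)) * (Matrix.vandermonde v).det := by
    intro v
    rw [Matrix.det_vandermonde, ← Finset.prod_mul_distrib]
    refine Finset.prod_congr rfl fun i _ => ?_
    rw [← Finset.prod_mul_distrib]
    refine Finset.prod_congr rfl fun j _ => ?_
    ring
  rw [key (fun i => z (w i)), key z]
  have h1 : Matrix.vandermonde (fun i => z (w i)) = (Matrix.vandermonde z).submatrix w id := rfl
  rw [h1, Matrix.det_permute]
  ring

lemma det_sum (z : Fin r → K) (d : ℕ → K) :
    (∑ w : Equiv.Perm (Fin r), ((Equiv.Perm.sign w : ℤ) : K) *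
      ∏ i : Fin r, ∏ k ∈ Finset.range (r - 1 - (i : ℕ)), (z (w i) - d k)) =
    ∏ i : Fin r, ∏ j ∈ Finset.Ioi i, (z i - z j) := by
  classical
  set s : Fin r → Polynomial K :=
    fun i => ∏ k ∈ Finset.range (r - 1 - (i : ℕ)), (Polynomial.X - Polynomial.C (d k)) with hs
  have heval : ∀ (t : K) (i : Fin r),
      Polynomial.eval t (s i) = ∏ k ∈ Finset.range (r - 1 - (i : ℕ)), (t - d k) := by
    intro t i; simp [hs, Polynomial.eval_prod]
  have h1 : (∑ w : Equiv.Perm (Fin r), ((Equiv.Perm.sign w : ℤ) : K) *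
      ∏ i : Fin r, ∏ k ∈ Finset.range (r - 1 - (i : ℕ)), (z (w i) - d k)) =
      (Matrix.of fun i j : Fin r => Polynomial.eval (z i) (s j)).det := by
    rw [Matrix.det_apply']
    refine Finset.sum_congr rfl fun w _ => ?_
    congr 1
    exact Finset.prod_congr rfl fun i _ => (heval _ _).symm
  have hdeg : ∀ j : Fin r, ((s ∘ Fin.rev) j).natDegree = (j : ℕ) := by
    intro j
    have : (Fin.rev j : ℕ) = r - 1 - (j : ℕ) := by
      have := j.isLt; simp [Fin.val_rev]; omega
    simp only [Function.comp, hs, this]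
    rw [Polynomial.natDegree_prod_of_monic _ _
      (fun k _ => Polynomial.monic_X_sub_C _)]
    simp only [Polynomial.natDegree_X_sub_C, Finset.sum_const, Finset.card_range, smul_eq_mul,
      mul_one]
    have := j.isLt; omega
  have hmonic : ∀ j : Fin r, ((s ∘ Fin.rev) j).Monic := fun j =>
    Polynomial.monic_prod_of_monic _ _ fun k _ => Polynomial.monic_X_sub_C _
  have h2 : (Matrix.of fun i j : Fin r => Polynomial.eval (z i) (s j)).det
      = (Matrix.of fun i j : Fin r =>
          Polynomial.eval ((z ∘ Fin.rev) i) ((s ∘ Fin.rev) j)).det := by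
    rw [← Matrix.det_submatrix_equiv_self Fin.revPerm]
    rfl
  rw [h1, h2, ← Matrix.det_eval_matrixOfPolynomials_eq_det_vandermonde (z ∘ Fin.rev)
    (s ∘ Fin.rev) hdeg hmonic, Matrix.det_vandermonde]
  exact prod_pairs_rev fun a b => z a - z b


lemma key_sum (z : Fin r → K) (hz : Function.Injective z) (d : ℕ → K) :
    ∑ w : Equiv.Perm (Fin r),
      ((∏ i : Fin r, ∏ k ∈ Finset.range (r - 1 - (i : ℕ)), (z (w i) - d k)) *
        ∏ i : Fin r, ∏ j ∈ Finset.Ioi i, (z (w i) - z (w j))⁻¹) = 1 := by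
  have hV : (∏ i : Fin r, ∏ j ∈ Finset.Ioi i, (z i - z j)) ≠ 0 := by
    refine Finset.prod_ne_zero_iff.mpr fun i _ => Finset.prod_ne_zero_iff.mpr fun j hj => ?_
    exact sub_ne_zero.mpr fun he => (ne_of_lt (Finset.mem_Ioi.mp hj)).symm ((hz he).symm)
  have hinv : ∀ w : Equiv.Perm (Fin r),
      (∏ i : Fin r, ∏ j ∈ Finset.Ioi i, (z (w i) - z (w j))⁻¹) =
      ((Equiv.Perm.sign w : ℤ) : K) * (∏ i : Fin r, ∏ j ∈ Finset.Ioi i, (z i - z j))⁻¹ := by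
    intro w
    have h1 : (∏ i : Fin r, ∏ j ∈ Finset.Ioi i, (z (w i) - z (w j))⁻¹) =
        (∏ i : Fin r, ∏ j ∈ Finset.Ioi i, (z (w i) - z (w j)))⁻¹ := by
      rw [← Finset.prod_inv_distrib]
      exact Finset.prod_congr rfl fun i _ => Finset.prod_inv_distrib _
    have he : ((Equiv.Perm.sign w : ℤ) : K) = 1 ∨ ((Equiv.Perm.sign w : ℤ) : K) = -1 := by
      rcases Int.units_eq_one_or (Equiv.Perm.sign w) with h | h <;> simp [h]
    have he2 : ((Equiv.Perm.sign w : ℤ) : K) * ((Equiv.Perm.sign w : ℤ) : K) = 1 := by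
      rcases he with h | h <;> rw [h] <;> ring
    rw [h1, prod_pairs_sub_perm w z, mul_inv]
    congr 1
    exact inv_eq_of_mul_eq_one_right he2
  calc ∑ w : Equiv.Perm (Fin r),
      ((∏ i : Fin r, ∏ k ∈ Finset.range (r - 1 - (i : ℕ)), (z (w i) - d k)) *
        ∏ i : Fin r, ∏ j ∈ Finset.Ioi i, (z (w i) - z (w j))⁻¹)
      = ∑ w : Equiv.Perm (Fin r),
        (((Equiv.Perm.sign w : ℤ) : K) *
          ∏ i : Fin r, ∏ k ∈ Finset.range (r - 1 - (i : ℕ)), (z (w i) - d k)) *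
          (∏ i : Fin r, ∏ j ∈ Finset.Ioi i, (z i - z j))⁻¹ := by
        refine Finset.sum_congr rfl fun w _ => ?_
        rw [hinv w]; ring
    _ = (∑ w : Equiv.Perm (Fin r), ((Equiv.Perm.sign w : ℤ) : K) *
          ∏ i : Fin r, ∏ k ∈ Finset.range (r - 1 - (i : ℕ)), (z (w i) - d k)) *
          (∏ i : Fin r, ∏ j ∈ Finset.Ioi i, (z i - z j))⁻¹ := by
        rw [Finset.sum_mul]
    _ = 1 := by rw [det_sum z d, mul_inv_cancel₀ hV]


end GQAux

/-- The staircase GQ-polynomial factors: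
`GQ_{δ_r}(x₁,…,x_r|b) = ∏_{1≤i≤j≤r} (x_i ⊕ x_j)`, independent of `b`.
Here `GQ_λ(x|b) = Σ_{w∈S_r} w(∏_i [[x_i|b]]^{λ_i} ∏_{i<j} (x_i⊕x_j)/(x_i⊖x_j))` with
`[[x|b]]^k = (x⊕x)(x⊖b₁)⋯(x⊖b_{k-1})`, and `δ_r = (r, r-1, …, 1)` so `λ_i = r-i+1`
(1-indexed), i.e. the factor for 0-indexed `i : Fin r` is
`(x_i⊕x_i)·∏_{k < r-1-i}(x_i⊖b_k)`. -/
theorem stmt_4 {K : Type*} [Field K] (r : ℕ) (β : K) (x : Fin r → K) (b : ℕ → K)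
    (hx : Function.Injective x)
    (hxu : ∀ i, 1 + β * x i ≠ 0) (hbu : ∀ j, 1 + β * b j ≠ 0) :
    ∑ w : Equiv.Perm (Fin r),
      ((∏ i : Fin r, ((x (w i) + x (w i) + β * x (w i) * x (w i)) *
          ∏ k ∈ Finset.range (r - 1 - (i : ℕ)), ((x (w i) - b k) / (1 + β * b k)))) *
        ∏ i : Fin r, ∏ j ∈ Finset.Ioi i,
          ((x (w i) + x (w j) + β * x (w i) * x (w j)) /
            ((x (w i) - x (w j)) / (1 + β * x (w j))))) =
    ∏ i : Fin r, ∏ j ∈ Finset.Ici i, (x i + x j + β * x i * x j) := by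
  classical
  set u : Fin r → K := fun i => 1 + β * x i with hu
  set z : Fin r → K := fun i => x i / u i with hzdef
  set c : ℕ → K := fun k => 1 + β * b k with hc
  set d : ℕ → K := fun k => b k / c k with hd
  have hune : ∀ i, u i ≠ 0 := hxu
  have hcne : ∀ k, c k ≠ 0 := hbu
  -- pointwise facts
  have hsub : ∀ i j : Fin r, x i - x j = (z i - z j) * (u i * u j) := by
    intro i j
    have h1 : (z i - z j) * (u i * u j) = x i * u j - x j * u i := by
      show (x i / u i - x j / u j) * (u i * u j) = _
      field_simp [hune i, hune j]
    rw [h1, hu]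
    ring
  have hz : Function.Injective z := by
    intro i j hij
    apply hx
    have h0 := hsub i j
    rw [hij, sub_self, zero_mul] at h0
    exact sub_eq_zero.mp h0
  have hxb : ∀ (i : Fin r) (k : ℕ), (x i - b k) / c k = (z i - d k) * u i := by
    intro i k
    rw [div_eq_iff (hcne k)]
    have h1 : (z i - d k) * u i * c k = x i * c k - b k * u i := by
      show (x i / u i - b k / c k) * u i * c k = _
      field_simp [hune i, hcne k]
    rw [h1, hu, hc]
    ring
  have hfrac : ∀ i j : Fin r,
      (x i + x j + β * x i * x j) / ((x i - x j) / u j) =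
      (x i + x j + β * x i * x j) * ((z i - z j)⁻¹ * (u i)⁻¹) := by
    intro i j
    have h1 : (x i - x j) / u j = (z i - z j) * u i := by
      rw [hsub i j, ← mul_assoc, mul_div_assoc, div_self (hune j), mul_one]
    rw [h1, div_eq_mul_inv, mul_inv]
  -- the RHS split
  have hRHS : (∏ i : Fin r, ∏ j ∈ Finset.Ici i, (x i + x j + β * x i * x j)) =
      (∏ i : Fin r, (x i + x i + β * x i * x i)) *
      ∏ i : Fin r, ∏ j ∈ Finset.Ioi i, (x i + x j + β * x i * x j) := by
    rw [← Finset.prod_mul_distrib]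
    refine Finset.prod_congr rfl fun i _ => ?_
    rw [Finset.Ici_eq_cons_Ioi, Finset.prod_cons]
  -- termwise
  have hterm : ∀ w : Equiv.Perm (Fin r),
      ((∏ i : Fin r, ((x (w i) + x (w i) + β * x (w i) * x (w i)) *
          ∏ k ∈ Finset.range (r - 1 - (i : ℕ)), ((x (w i) - b k) / c k))) *
        ∏ i : Fin r, ∏ j ∈ Finset.Ioi i,
          ((x (w i) + x (w j) + β * x (w i) * x (w j)) /
            ((x (w i) - x (w j)) / u (w j)))) =
      ((∏ i : Fin r, (x i + x i + β * x i * x i)) *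
        ∏ i : Fin r, ∏ j ∈ Finset.Ioi i, (x i + x j + β * x i * x j)) *
      ((∏ i : Fin r, ∏ k ∈ Finset.range (r - 1 - (i : ℕ)), (z (w i) - d k)) *
        ∏ i : Fin r, ∏ j ∈ Finset.Ioi i, (z (w i) - z (w j))⁻¹) := by
    intro w
    have E4 : (∏ i : Fin r, (x (w i) + x (w i) + β * x (w i) * x (w i))) =
        ∏ i : Fin r, (x i + x i + β * x i * x i) :=
      Equiv.prod_comp w (fun i => x i + x i + β * x i * x i)
    have E1 : (∏ i : Fin r, ∏ k ∈ Finset.range (r - 1 - (i : ℕ)), ((x (w i) - b k) / c k)) =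
        (∏ i : Fin r, ∏ k ∈ Finset.range (r - 1 - (i : ℕ)), (z (w i) - d k)) *
        ∏ i : Fin r, u (w i) ^ (r - 1 - (i : ℕ)) := by
      rw [← Finset.prod_mul_distrib]
      refine Finset.prod_congr rfl fun i _ => ?_
      calc (∏ k ∈ Finset.range (r - 1 - (i : ℕ)), ((x (w i) - b k) / c k))
          = ∏ k ∈ Finset.range (r - 1 - (i : ℕ)), ((z (w i) - d k) * u (w i)) :=
            Finset.prod_congr rfl fun k _ => hxb _ _
        _ = (∏ k ∈ Finset.range (r - 1 - (i : ℕ)), (z (w i) - d k)) * u (w i) ^ (r - 1 - (i : ℕ)) := by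
            rw [Finset.prod_mul_distrib, Finset.prod_const, Finset.card_range]
    have E2 : (∏ i : Fin r, ∏ j ∈ Finset.Ioi i,
          ((x (w i) + x (w j) + β * x (w i) * x (w j)) /
            ((x (w i) - x (w j)) / u (w j)))) =
        (∏ i : Fin r, ∏ j ∈ Finset.Ioi i, (x i + x j + β * x i * x j)) *
        ((∏ i : Fin r, ∏ j ∈ Finset.Ioi i, (z (w i) - z (w j))⁻¹) *
         ∏ i : Fin r, ((u (w i))⁻¹) ^ (r - 1 - (i : ℕ))) := by
      have step1 : ∀ i : Fin r, (∏ j ∈ Finset.Ioi i,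
          ((x (w i) + x (w j) + β * x (w i) * x (w j)) /
            ((x (w i) - x (w j)) / u (w j)))) =
          (∏ j ∈ Finset.Ioi i, (x (w i) + x (w j) + β * x (w i) * x (w j))) *
          ((∏ j ∈ Finset.Ioi i, (z (w i) - z (w j))⁻¹) * ((u (w i))⁻¹) ^ (r - 1 - (i : ℕ))) := by
        intro i
        calc (∏ j ∈ Finset.Ioi i,
          ((x (w i) + x (w j) + β * x (w i) * x (w j)) /
            ((x (w i) - x (w j)) / u (w j))))
            = ∏ j ∈ Finset.Ioi i, ((x (w i) + x (w j) + β * x (w i) * x (w j)) *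
                ((z (w i) - z (w j))⁻¹ * (u (w i))⁻¹)) :=
              Finset.prod_congr rfl fun j _ => hfrac _ _
          _ = (∏ j ∈ Finset.Ioi i, (x (w i) + x (w j) + β * x (w i) * x (w j))) *
              ((∏ j ∈ Finset.Ioi i, (z (w i) - z (w j))⁻¹) * ((u (w i))⁻¹) ^ (r - 1 - (i : ℕ))) := by
              rw [Finset.prod_mul_distrib, Finset.prod_mul_distrib, Finset.prod_const,
                Fin.card_Ioi]
      calc (∏ i : Fin r, ∏ j ∈ Finset.Ioi i,
          ((x (w i) + x (w j) + β * x (w i) * x (w j)) /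
            ((x (w i) - x (w j)) / u (w j))))
          = ∏ i : Fin r, ((∏ j ∈ Finset.Ioi i, (x (w i) + x (w j) + β * x (w i) * x (w j))) *
              ((∏ j ∈ Finset.Ioi i, (z (w i) - z (w j))⁻¹) * ((u (w i))⁻¹) ^ (r - 1 - (i : ℕ)))) :=
            Finset.prod_congr rfl fun i _ => step1 i
        _ = (∏ i : Fin r, ∏ j ∈ Finset.Ioi i, (x (w i) + x (w j) + β * x (w i) * x (w j))) *
            ((∏ i : Fin r, ∏ j ∈ Finset.Ioi i, (z (w i) - z (w j))⁻¹) *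
             ∏ i : Fin r, ((u (w i))⁻¹) ^ (r - 1 - (i : ℕ))) := by
            rw [Finset.prod_mul_distrib, Finset.prod_mul_distrib]
        _ = (∏ i : Fin r, ∏ j ∈ Finset.Ioi i, (x i + x j + β * x i * x j)) *
            ((∏ i : Fin r, ∏ j ∈ Finset.Ioi i, (z (w i) - z (w j))⁻¹) *
             ∏ i : Fin r, ((u (w i))⁻¹) ^ (r - 1 - (i : ℕ))) := by
            rw [prod_pairs_symm w (fun a b => x a + x b + β * x a * x b)
              (fun a b => by ring)]
    have E3 : (∏ i : Fin r, u (w i) ^ (r - 1 - (i : ℕ))) *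
        (∏ i : Fin r, ((u (w i))⁻¹) ^ (r - 1 - (i : ℕ))) = 1 := by
      rw [← Finset.prod_mul_distrib]
      refine Finset.prod_eq_one fun i _ => ?_
      rw [inv_pow, mul_inv_cancel₀ (pow_ne_zero _ (hune (w i)))]
    calc ((∏ i : Fin r, ((x (w i) + x (w i) + β * x (w i) * x (w i)) *
          ∏ k ∈ Finset.range (r - 1 - (i : ℕ)), ((x (w i) - b k) / c k))) *
        ∏ i : Fin r, ∏ j ∈ Finset.Ioi i,
          ((x (w i) + x (w j) + β * x (w i) * x (w j)) /
            ((x (w i) - x (w j)) / u (w j))))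
        = ((∏ i : Fin r, (x (w i) + x (w i) + β * x (w i) * x (w i))) *
            (∏ i : Fin r, ∏ k ∈ Finset.range (r - 1 - (i : ℕ)), ((x (w i) - b k) / c k))) *
          ∏ i : Fin r, ∏ j ∈ Finset.Ioi i,
            ((x (w i) + x (w j) + β * x (w i) * x (w j)) /
              ((x (w i) - x (w j)) / u (w j))) := by rw [Finset.prod_mul_distrib]
      _ = ((∏ i : Fin r, (x i + x i + β * x i * x i)) *
            ((∏ i : Fin r, ∏ k ∈ Finset.range (r - 1 - (i : ℕ)), (z (w i) - d k)) *
             ∏ i : Fin r, u (w i) ^ (r - 1 - (i : ℕ)))) *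
          ((∏ i : Fin r, ∏ j ∈ Finset.Ioi i, (x i + x j + β * x i * x j)) *
            ((∏ i : Fin r, ∏ j ∈ Finset.Ioi i, (z (w i) - z (w j))⁻¹) *
             ∏ i : Fin r, ((u (w i))⁻¹) ^ (r - 1 - (i : ℕ)))) := by rw [E4, E1, E2]
      _ = (((∏ i : Fin r, (x i + x i + β * x i * x i)) *
            ∏ i : Fin r, ∏ j ∈ Finset.Ioi i, (x i + x j + β * x i * x j)) *
          ((∏ i : Fin r, ∏ k ∈ Finset.range (r - 1 - (i : ℕ)), (z (w i) - d k)) *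
            ∏ i : Fin r, ∏ j ∈ Finset.Ioi i, (z (w i) - z (w j))⁻¹)) *
          ((∏ i : Fin r, u (w i) ^ (r - 1 - (i : ℕ))) *
            (∏ i : Fin r, ((u (w i))⁻¹) ^ (r - 1 - (i : ℕ)))) := by ring
      _ = ((∏ i : Fin r, (x i + x i + β * x i * x i)) *
            ∏ i : Fin r, ∏ j ∈ Finset.Ioi i, (x i + x j + β * x i * x j)) *
          ((∏ i : Fin r, ∏ k ∈ Finset.range (r - 1 - (i : ℕ)), (z (w i) - d k)) *
            ∏ i : Fin r, ∏ j ∈ Finset.Ioi i, (z (w i) - z (w j))⁻¹) := by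
          rw [E3, mul_one]
  calc (∑ w : Equiv.Perm (Fin r),
      ((∏ i : Fin r, ((x (w i) + x (w i) + β * x (w i) * x (w i)) *
          ∏ k ∈ Finset.range (r - 1 - (i : ℕ)), ((x (w i) - b k) / c k))) *
        ∏ i : Fin r, ∏ j ∈ Finset.Ioi i,
          ((x (w i) + x (w j) + β * x (w i) * x (w j)) /
            ((x (w i) - x (w j)) / u (w j)))))
      = ∑ w : Equiv.Perm (Fin r),
        ((∏ i : Fin r, (x i + x i + β * x i * x i)) *
          ∏ i : Fin r, ∏ j ∈ Finset.Ioi i, (x i + x j + β * x i * x j)) *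
        ((∏ i : Fin r, ∏ k ∈ Finset.range (r - 1 - (i : ℕ)), (z (w i) - d k)) *
          ∏ i : Fin r, ∏ j ∈ Finset.Ioi i, (z (w i) - z (w j))⁻¹) :=
        Finset.sum_congr rfl fun w _ => hterm w
    _ = ((∏ i : Fin r, (x i + x i + β * x i * x i)) *
          ∏ i : Fin r, ∏ j ∈ Finset.Ioi i, (x i + x j + β * x i * x j)) *
        ∑ w : Equiv.Perm (Fin r),
          ((∏ i : Fin r, ∏ k ∈ Finset.range (r - 1 - (i : ℕ)), (z (w i) - d k)) *
            ∏ i : Fin r, ∏ j ∈ Finset.Ioi i, (z (w i) - z (w j))⁻¹) := by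
        rw [Finset.mul_sum]
    _ = (∏ i : Fin r, (x i + x i + β * x i * x i)) *
          ∏ i : Fin r, ∏ j ∈ Finset.Ioi i, (x i + x j + β * x i * x j) := by
        rw [key_sum z hz d, mul_one]
    _ = ∏ i : Fin r, ∏ j ∈ Finset.Ici i, (x i + x j + β * x i * x j) := hRHS.symm
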